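/- Let $r, s, t \in (0, 1/2)$ with $t < r + s - 1/2$. Then there exists a constant $C = C(r,s,t) < \infty$ such that for all sequences $(\psi_k)_{k\in\mathbb{Z}}, (\phi_k)_{k\in\mathbb{Z}}$ with $\sum_k \langle k\rangle^{2r}\psi_k^2 < \infty$ and $\sum_k \langle k\rangle^{2s}\phi_k^2 < \infty$, the convolution $(\psi * \phi)_k = \sum_{j} \psi_j \phi_{k-j}$ satisfies $\sum_k \langle k \rangle^{2t} (\psi*\phi)_k^2 \leq C^2 \left(\sum_k \langle k\rangle^{2r}\psi_k^2\right)\left(\sum_k \langle k\rangle^{2s}\phi_k^2\right)$. -/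

import Mathlib

open ENNReal

noncomputable def sobW (e : ℝ) (k : ℤ) : ℝ≥0∞ := ENNReal.ofReal ((1 + (k:ℝ)^2) ^ e)

lemma sobw_pos (k : ℤ) : (0:ℝ) < 1 + (k:ℝ)^2 := by positivity

lemma sobW_pos (e : ℝ) (k : ℤ) : 0 < sobW e k :=
  ENNReal.ofReal_pos.2 (Real.rpow_pos_of_pos (sobw_pos k) e)

lemma sobW_ne_top (e : ℝ) (k : ℤ) : sobW e k ≠ ⊤ := ENNReal.ofReal_ne_top

lemma sobW_mul (a b : ℝ) (k : ℤ) : sobW a k * sobW b k = sobW (a + b) k := by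
  rw [sobW, sobW, sobW, ← ENNReal.ofReal_mul (Real.rpow_nonneg (sobw_pos k).le _),
    ← Real.rpow_add (sobw_pos k)]

lemma sobW_rpow (a p : ℝ) (k : ℤ) : (sobW a k) ^ p = sobW (a * p) k := by
  rw [sobW, sobW, ENNReal.ofReal_rpow_of_pos (Real.rpow_pos_of_pos (sobw_pos k) a),
    ← Real.rpow_mul (sobw_pos k).le]

lemma sobW_zero (k : ℤ) : sobW 0 k = 1 := by simp [sobW]

lemma sob_summable {γ : ℝ} (hγ : 1/2 < γ) :
    Summable (fun j : ℤ => (1 + (j:ℝ)^2) ^ (-γ)) := by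
  have h2γ : 1 < 2 * γ := by linarith
  have hind : Summable (fun j : ℤ => if j = 0 then (1:ℝ) else 0) := by
    apply summable_of_ne_finset_zero (s := {0})
    intro j hj
    simp only [Finset.mem_singleton] at hj
    simp [hj]
  have hs : Summable (fun j : ℤ => |(j:ℝ)| ^ (-(2*γ)) + if j = 0 then (1:ℝ) else 0) :=
    (Real.summable_abs_int_rpow h2γ).add hind
  refine hs.of_nonneg_of_le (fun j => Real.rpow_nonneg (sobw_pos j).le _) (fun j => ?_)
  rcases eq_or_ne j 0 with rfl | hj
  · simp [Real.rpow_nonneg]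
  · have hj1 : (1:ℝ) ≤ (j:ℝ)^2 := by
      have : (1:ℝ) ≤ |(j:ℝ)| := by
        rw [← Int.cast_abs]
        exact_mod_cast Int.one_le_abs hj
      nlinarith [abs_nonneg (j:ℝ), sq_abs (j:ℝ)]
    have h1 : (1 + (j:ℝ)^2) ^ (-γ) ≤ ((j:ℝ)^2) ^ (-γ) := by
      apply Real.rpow_le_rpow_of_nonpos (by positivity) (by linarith) (by linarith)
    have h2 : ((j:ℝ)^2) ^ (-γ) = |(j:ℝ)| ^ (-(2*γ)) := by
      rw [← sq_abs, ← Real.rpow_natCast |(j:ℝ)| 2, ← Real.rpow_mul (abs_nonneg _)]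
      norm_num
    calc (1 + (j:ℝ)^2) ^ (-γ) ≤ ((j:ℝ)^2) ^ (-γ) := h1
      _ = |(j:ℝ)| ^ (-(2*γ)) := h2
      _ ≤ _ := by simp [hj]

lemma tsum_inner_le_Lp_mul_Lq (f g : ℤ → ℝ≥0∞) {p q : ℝ} (hpq : p.HolderConjugate q) :
    ∑' i, f i * g i ≤ (∑' i, f i ^ p) ^ (1/p) * (∑' i, g i ^ q) ^ (1/q) := by
  rw [ENNReal.tsum_eq_iSup_sum]
  refine iSup_le fun s => (ENNReal.inner_le_Lp_mul_Lq s f g hpq).trans ?_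
  exact mul_le_mul'
    (ENNReal.rpow_le_rpow (ENNReal.sum_le_tsum s) (by
      have := hpq.pos; positivity))
    (ENNReal.rpow_le_rpow (ENNReal.sum_le_tsum s) (by
      have := hpq.symm.pos; positivity))

lemma sob_kernel_le {α β : ℝ} (hα : 0 < α) (hβ : 0 < β) (k : ℤ) :
    ∑' j : ℤ, sobW (-α) j * sobW (-β) (k - j) ≤ ∑' j : ℤ, sobW (-(α+β)) j := by
  have hab : 0 < α + β := by linarith
  have hpq : Real.HolderConjugate ((α+β)/α) ((α+β)/β) := by
    refine ⟨?_, by positivity, by positivity⟩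
    rw [inv_div, inv_div, inv_one, ← add_div, div_self hab.ne']
  have h1 : ∀ j : ℤ, (sobW (-α) j) ^ ((α+β)/α) = sobW (-(α+β)) j := fun j => by
    rw [sobW_rpow]; congr 1; field_simp
  have h2 : ∀ j : ℤ, (sobW (-β) j) ^ ((α+β)/β) = sobW (-(α+β)) j := fun j => by
    rw [sobW_rpow]; congr 1; field_simp
  have hsum : 1/((α+β)/α) + 1/((α+β)/β) = 1 := by
    rw [one_div_div, one_div_div]; field_simp
  calc ∑' j : ℤ, sobW (-α) j * sobW (-β) (k - j)
      ≤ (∑' j : ℤ, sobW (-α) j ^ ((α+β)/α)) ^ (1/((α+β)/α)) *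
        (∑' j : ℤ, sobW (-β) (k - j) ^ ((α+β)/β)) ^ (1/((α+β)/β)) :=
        tsum_inner_le_Lp_mul_Lq _ _ hpq
    _ = (∑' j : ℤ, sobW (-(α+β)) j) ^ (1/((α+β)/α)) *
        (∑' j : ℤ, sobW (-(α+β)) j) ^ (1/((α+β)/β)) := by
        have hre := (Equiv.subLeft k).tsum_eq (fun j => sobW (-(α+β)) j)
        simp only [Equiv.subLeft_apply] at hre
        rw [tsum_congr h1, tsum_congr (fun j => h2 (k - j)), hre]
    _ = (∑' j : ℤ, sobW (-(α+β)) j) ^ (1/((α+β)/α) + 1/((α+β)/β)) :=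
        (ENNReal.rpow_add_of_nonneg _ _ (by positivity) (by positivity)).symm
    _ = _ := by rw [hsum, ENNReal.rpow_one]

lemma sob_conv_sq (a b : ℤ → ℝ≥0∞) {ρ σ : ℝ} (hρ : 0 < ρ) (hσ : 0 < σ) :
    ∑' k : ℤ, (∑' j : ℤ, a j * b (k - j)) ^ (2:ℝ)
      ≤ (∑' j : ℤ, sobW (-(ρ+σ)) j) * ((∑' j : ℤ, sobW ρ j * a j ^ (2:ℝ)) *
          (∑' j : ℤ, sobW σ j * b j ^ (2:ℝ))) := by
  have h22 : Real.HolderConjugate 2 2 := ⟨by norm_num, by norm_num, by norm_num⟩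
  set Z := ∑' j : ℤ, sobW (-(ρ+σ)) j with hZ
  have key : ∀ k : ℤ, (∑' j : ℤ, a j * b (k - j)) ^ (2:ℝ)
      ≤ (∑' j : ℤ, (sobW ρ j * a j ^ (2:ℝ)) * (sobW σ (k-j) * b (k-j) ^ (2:ℝ))) * Z := by
    intro k
    have hterm : ∀ j : ℤ, a j * b (k - j) =
        ((sobW (ρ/2) j * a j) * (sobW (σ/2) (k-j) * b (k-j))) *
          (sobW (-(ρ/2)) j * sobW (-(σ/2)) (k-j)) := by
      intro j
      have e1 : sobW (ρ/2) j * sobW (-(ρ/2)) j = 1 := by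
        rw [sobW_mul]; norm_num [sobW_zero]
      have e2 : sobW (σ/2) (k-j) * sobW (-(σ/2)) (k-j) = 1 := by
        rw [sobW_mul]; norm_num [sobW_zero]
      calc a j * b (k - j)
          = (sobW (ρ/2) j * sobW (-(ρ/2)) j) *
            ((sobW (σ/2) (k-j) * sobW (-(σ/2)) (k-j)) * (a j * b (k - j))) := by
            rw [e1, e2]; ring
        _ = _ := by ring
    have hf2 : ∀ j : ℤ, ((sobW (ρ/2) j * a j) * (sobW (σ/2) (k-j) * b (k-j))) ^ (2:ℝ)
        = (sobW ρ j * a j ^ (2:ℝ)) * (sobW σ (k-j) * b (k-j) ^ (2:ℝ)) := by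
      intro j
      rw [ENNReal.mul_rpow_of_nonneg _ _ (by norm_num),
        ENNReal.mul_rpow_of_nonneg _ _ (by norm_num),
        ENNReal.mul_rpow_of_nonneg _ _ (by norm_num), sobW_rpow, sobW_rpow]
      norm_num
    have hg2 : ∀ j : ℤ, (sobW (-(ρ/2)) j * sobW (-(σ/2)) (k-j)) ^ (2:ℝ)
        = sobW (-ρ) j * sobW (-σ) (k-j) := by
      intro j
      rw [ENNReal.mul_rpow_of_nonneg _ _ (by norm_num), sobW_rpow, sobW_rpow]
      norm_num
    have hCS : (∑' j : ℤ, a j * b (k - j))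
        ≤ (∑' j : ℤ, (sobW ρ j * a j ^ (2:ℝ)) * (sobW σ (k-j) * b (k-j) ^ (2:ℝ))) ^ (1/(2:ℝ)) *
          (∑' j : ℤ, sobW (-ρ) j * sobW (-σ) (k-j)) ^ (1/(2:ℝ)) := by
      rw [tsum_congr hterm]
      have := tsum_inner_le_Lp_mul_Lq
        (fun j : ℤ => (sobW (ρ/2) j * a j) * (sobW (σ/2) (k-j) * b (k-j)))
        (fun j : ℤ => sobW (-(ρ/2)) j * sobW (-(σ/2)) (k-j)) h22
      simpa only [tsum_congr hf2, tsum_congr hg2] using this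
    calc (∑' j : ℤ, a j * b (k - j)) ^ (2:ℝ)
        ≤ ((∑' j : ℤ, (sobW ρ j * a j ^ (2:ℝ)) * (sobW σ (k-j) * b (k-j) ^ (2:ℝ))) ^ (1/(2:ℝ)) *
          (∑' j : ℤ, sobW (-ρ) j * sobW (-σ) (k-j)) ^ (1/(2:ℝ))) ^ (2:ℝ) :=
          ENNReal.rpow_le_rpow hCS (by norm_num)
      _ = (∑' j : ℤ, (sobW ρ j * a j ^ (2:ℝ)) * (sobW σ (k-j) * b (k-j) ^ (2:ℝ))) *
          (∑' j : ℤ, sobW (-ρ) j * sobW (-σ) (k-j)) := by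
          rw [ENNReal.mul_rpow_of_nonneg _ _ (by norm_num), ← ENNReal.rpow_mul,
            ← ENNReal.rpow_mul]
          norm_num
      _ ≤ _ := mul_le_mul_right (sob_kernel_le hρ hσ k) _
  calc ∑' k : ℤ, (∑' j : ℤ, a j * b (k - j)) ^ (2:ℝ)
      ≤ ∑' k : ℤ, (∑' j : ℤ, (sobW ρ j * a j ^ (2:ℝ)) * (sobW σ (k-j) * b (k-j) ^ (2:ℝ))) * Z :=
        ENNReal.tsum_le_tsum key
    _ = (∑' k : ℤ, ∑' j : ℤ, (sobW ρ j * a j ^ (2:ℝ)) * (sobW σ (k-j) * b (k-j) ^ (2:ℝ))) * Z :=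
        ENNReal.tsum_mul_right
    _ = (∑' j : ℤ, ∑' k : ℤ, (sobW ρ j * a j ^ (2:ℝ)) * (sobW σ (k-j) * b (k-j) ^ (2:ℝ))) * Z := by
        rw [ENNReal.tsum_comm]
    _ = ((∑' j : ℤ, sobW ρ j * a j ^ (2:ℝ)) * (∑' j : ℤ, sobW σ j * b j ^ (2:ℝ))) * Z := by
        congr 1
        rw [← ENNReal.tsum_mul_right]
        refine tsum_congr fun j => ?_
        rw [ENNReal.tsum_mul_left]
        congr 1
        have hre := (Equiv.subRight j).tsum_eq (fun i => sobW σ i * b i ^ (2:ℝ))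
        simp only [Equiv.subRight_apply] at hre
        exact hre
    _ = _ := by ring

lemma sob_add_sq_le (x y : ℝ≥0∞) : (x + y) ^ (2:ℝ) ≤ 4 * (x ^ (2:ℝ) + y ^ (2:ℝ)) := by
  have h4 : (4:ℝ≥0∞) = (2:ℝ≥0∞) ^ (2:ℝ) := by
    rw [show (2:ℝ) = ((2:ℕ):ℝ) by norm_num, ENNReal.rpow_natCast]; norm_num
  have key : ∀ a b : ℝ≥0∞, a ≤ b → (a + b) ^ (2:ℝ) ≤ 4 * (a ^ (2:ℝ) + b ^ (2:ℝ)) := by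
    intro a b h
    have h1 : a + b ≤ 2 * b := by rw [two_mul]; exact add_le_add_left h b
    have h2 : (a+b)^(2:ℝ) ≤ (2*b)^(2:ℝ) := ENNReal.rpow_le_rpow h1 (by norm_num)
    have h3 : (2*b)^(2:ℝ) = 4 * b^(2:ℝ) := by
      rw [ENNReal.mul_rpow_of_nonneg _ _ (by norm_num), ← h4]
    exact h2.trans (by rw [h3]; exact mul_le_mul_right le_add_self _)
  rcases le_total x y with h | h
  · exact key x y h
  · have := key y x h
    rw [add_comm y x, add_comm (y ^ (2:ℝ))] at this
    exact this

lemma sob_peetre {e : ℝ} (he : 0 ≤ e) (he1 : e ≤ 1) (j k : ℤ) :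
    sobW e k ≤ (2:ℝ≥0∞) ^ e * (sobW e j + sobW e (k - j)) := by
  have hreal : (1 + (k:ℝ)^2) ≤ 2 * ((1 + (j:ℝ)^2) + (1 + ((k - j : ℤ):ℝ)^2)) := by
    push_cast
    nlinarith [sq_nonneg ((j:ℝ) - ((k:ℝ) - (j:ℝ)))]
  have hW : ∀ m : ℤ, sobW e m = (ENNReal.ofReal (1 + (m:ℝ)^2)) ^ e := fun m => by
    rw [sobW, ENNReal.ofReal_rpow_of_pos (sobw_pos m)]
  rw [hW, hW, hW]
  calc (ENNReal.ofReal (1 + (k:ℝ)^2)) ^ e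
      ≤ (ENNReal.ofReal (2 * ((1 + (j:ℝ)^2) + (1 + ((k - j : ℤ):ℝ)^2)))) ^ e :=
        ENNReal.rpow_le_rpow (ENNReal.ofReal_le_ofReal hreal) he
    _ = (2 * (ENNReal.ofReal (1 + (j:ℝ)^2) + ENNReal.ofReal (1 + ((k - j : ℤ):ℝ)^2))) ^ e := by
        rw [ENNReal.ofReal_mul (by norm_num), ENNReal.ofReal_add (by positivity) (by positivity)]
        norm_num
    _ = (2:ℝ≥0∞) ^ e * (ENNReal.ofReal (1 + (j:ℝ)^2) + ENNReal.ofReal (1 + ((k - j : ℤ):ℝ)^2)) ^ e := by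
        rw [ENNReal.mul_rpow_of_nonneg _ _ he]
    _ ≤ _ := by
        refine mul_le_mul_right ?_ _
        exact ENNReal.rpow_add_le_add_rpow _ _ he he1

/-- Young-type inequality in fractional Sobolev spaces on the torus, in Fourier
coordinates: for `r,s,t ∈ (0,1/2)` with `t < r + s - 1/2`,
`‖ψ * φ‖_{H^t} ≤ C ‖ψ‖_{H^r} ‖φ‖_{H^s}`, where `⟨k⟩² = 1 + k²`. -/
theorem stmt_15 (r s t : ℝ) (hr0 : 0 < r) (hr : r < 1/2) (hs0 : 0 < s) (hs : s < 1/2)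
    (ht0 : 0 < t) (ht : t < 1/2) (hts : t < r + s - 1/2) :
    ∃ C : ℝ, 0 < C ∧ ∀ ψ φ : ℤ → ℝ,
      Summable (fun k : ℤ => (1 + (k : ℝ)^2) ^ r * (ψ k)^2) →
      Summable (fun k : ℤ => (1 + (k : ℝ)^2) ^ s * (φ k)^2) →
      ∑' k : ℤ, (1 + (k : ℝ)^2) ^ t * (∑' j : ℤ, ψ j * φ (k - j))^2
        ≤ C^2 * (∑' k : ℤ, (1 + (k : ℝ)^2) ^ r * (ψ k)^2) *
            (∑' k : ℤ, (1 + (k : ℝ)^2) ^ s * (φ k)^2) := by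
  have htr : (0:ℝ) < r - t := by linarith
  have hst : (0:ℝ) < s - t := by linarith
  have hδ : 1/2 < r + s - t := by linarith
  set Z : ℝ≥0∞ := ∑' j : ℤ, sobW (-(r+s-t)) j with hZdef
  have hZof : Z = ENNReal.ofReal (∑' j : ℤ, (1 + (j:ℝ)^2) ^ (-(r+s-t))) := by
    rw [hZdef, ENNReal.ofReal_tsum_of_nonneg
      (fun j : ℤ => Real.rpow_nonneg (sobw_pos j).le _) (sob_summable hδ)]
    rfl
  have hZtop : Z ≠ ⊤ := by rw [hZof]; exact ENNReal.ofReal_ne_top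
  have hZ0 : Z ≠ 0 := by
    have hle : sobW (-(r+s-t)) 0 ≤ Z := ENNReal.le_tsum 0
    exact fun h => ((sobW_pos (-(r+s-t)) 0).trans_le hle).ne' h
  set K : ℝ≥0∞ := (2:ℝ≥0∞)^t * 8 * Z with hKdef
  have h2t_top : (2:ℝ≥0∞)^t ≠ ⊤ := by
    exact (ENNReal.rpow_lt_top_of_nonneg ht0.le (by norm_num)).ne
  have hKtop : K ≠ ⊤ := by
    rw [hKdef]
    exact ENNReal.mul_ne_top (ENNReal.mul_ne_top h2t_top (by norm_num)) hZtop
  have hK0 : K ≠ 0 := by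
    rw [hKdef]
    refine mul_ne_zero (mul_ne_zero ?_ (by norm_num)) hZ0
    simp [ENNReal.rpow_eq_zero_iff]
  refine ⟨Real.sqrt K.toReal, Real.sqrt_pos.2 (ENNReal.toReal_pos hK0 hKtop), ?_⟩
  intro ψ φ hΨ hΦ
  have hC2 : (Real.sqrt K.toReal)^2 = K.toReal := Real.sq_sqrt ENNReal.toReal_nonneg
  set a : ℤ → ℝ≥0∞ := fun j => ENNReal.ofReal |ψ j| with hadef
  set b : ℤ → ℝ≥0∞ := fun j => ENNReal.ofReal |φ j| with hbdef
  have ha2 : ∀ j : ℤ, a j ^ (2:ℝ) = ENNReal.ofReal ((ψ j)^2) := fun j => by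
    rw [hadef, ENNReal.ofReal_rpow_of_nonneg (abs_nonneg _) (by norm_num)]
    congr 1
    rw [show ((2:ℝ)) = ((2:ℕ):ℝ) by norm_num, Real.rpow_natCast, sq_abs]
  have hb2 : ∀ j : ℤ, b j ^ (2:ℝ) = ENNReal.ofReal ((φ j)^2) := fun j => by
    rw [hbdef, ENNReal.ofReal_rpow_of_nonneg (abs_nonneg _) (by norm_num)]
    congr 1
    rw [show ((2:ℝ)) = ((2:ℕ):ℝ) by norm_num, Real.rpow_natCast, sq_abs]
  have hP : (∑' j : ℤ, sobW r j * a j ^ (2:ℝ))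
      = ENNReal.ofReal (∑' k : ℤ, (1 + (k:ℝ)^2)^r * (ψ k)^2) := by
    rw [ENNReal.ofReal_tsum_of_nonneg (fun j => by positivity) hΨ]
    refine tsum_congr fun j => ?_
    rw [ha2, sobW, ← ENNReal.ofReal_mul (Real.rpow_nonneg (sobw_pos j).le _)]
  have hQ : (∑' j : ℤ, sobW s j * b j ^ (2:ℝ))
      = ENNReal.ofReal (∑' k : ℤ, (1 + (k:ℝ)^2)^s * (φ k)^2) := by
    rw [ENNReal.ofReal_tsum_of_nonneg (fun j => by positivity) hΦ]
    refine tsum_congr fun j => ?_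
    rw [hb2, sobW, ← ENNReal.ofReal_mul (Real.rpow_nonneg (sobw_pos j).le _)]
  set T : ℤ → ℝ≥0∞ := fun k => ∑' j : ℤ, a j * b (k - j) with hTdef
  set S1 : ℤ → ℝ≥0∞ := fun k => ∑' j : ℤ, (sobW (t/2) j * a j) * b (k - j) with hS1def
  set S2 : ℤ → ℝ≥0∞ := fun k => ∑' j : ℤ, a j * (sobW (t/2) (k - j) * b (k - j)) with hS2def
  have stepA : ∀ k : ℤ, ENNReal.ofReal ((1 + (k:ℝ)^2)^t * (∑' j : ℤ, ψ j * φ (k - j))^2)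
      ≤ sobW t k * T k ^ (2:ℝ) := by
    intro k
    rw [ENNReal.ofReal_mul (Real.rpow_nonneg (sobw_pos k).le _)]
    refine mul_le_mul' le_rfl ?_
    have habs : ENNReal.ofReal ((∑' j : ℤ, ψ j * φ (k - j))^2)
        = (ENNReal.ofReal |∑' j : ℤ, ψ j * φ (k - j)|) ^ (2:ℝ) := by
      rw [ENNReal.ofReal_rpow_of_nonneg (abs_nonneg _) (by norm_num)]
      congr 1
      rw [show ((2:ℝ)) = ((2:ℕ):ℝ) by norm_num, Real.rpow_natCast, sq_abs]
    rw [habs]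
    refine ENNReal.rpow_le_rpow ?_ (by norm_num)
    by_cases hsum : Summable (fun j : ℤ => ψ j * φ (k - j))
    · have hsabs : Summable (fun j : ℤ => |ψ j * φ (k - j)|) := hsum.abs
      have h1 : |∑' j : ℤ, ψ j * φ (k - j)| ≤ ∑' j : ℤ, |ψ j * φ (k - j)| := by
        have h0 := norm_tsum_le_tsum_norm (f := fun j : ℤ => ψ j * φ (k - j))
            (by simpa only [Real.norm_eq_abs] using hsabs)
        simp only [Real.norm_eq_abs] at h0
        exact h0
      calc ENNReal.ofReal |∑' j : ℤ, ψ j * φ (k - j)|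
          ≤ ENNReal.ofReal (∑' j : ℤ, |ψ j * φ (k - j)|) := ENNReal.ofReal_le_ofReal h1
        _ = ∑' j : ℤ, ENNReal.ofReal |ψ j * φ (k - j)| :=
            ENNReal.ofReal_tsum_of_nonneg (fun j => abs_nonneg _) hsabs
        _ = T k := by
            refine tsum_congr fun j => ?_
            rw [abs_mul, ENNReal.ofReal_mul (abs_nonneg _)]
    · rw [tsum_eq_zero_of_not_summable hsum]
      simp
  have stepB : ∀ k : ℤ, sobW t k * T k ^ (2:ℝ)
      ≤ (2:ℝ≥0∞)^t * 4 * (S1 k ^ (2:ℝ) + S2 k ^ (2:ℝ)) := by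
    intro k
    have hU : sobW (t/2) k * T k ≤ (2:ℝ≥0∞)^(t/2) * (S1 k + S2 k) := by
      rw [hTdef, ← ENNReal.tsum_mul_left]
      calc ∑' j : ℤ, sobW (t/2) k * (a j * b (k - j))
          ≤ ∑' j : ℤ, ((2:ℝ≥0∞)^(t/2) * (sobW (t/2) j + sobW (t/2) (k - j))) * (a j * b (k - j)) :=
            ENNReal.tsum_le_tsum fun j =>
              mul_le_mul_left (sob_peetre (by linarith) (by linarith) j k) _
        _ = ∑' j : ℤ, (2:ℝ≥0∞)^(t/2) * ((sobW (t/2) j * a j) * b (k - j)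
              + a j * (sobW (t/2) (k - j) * b (k - j))) := by
            refine tsum_congr fun j => ?_; ring
        _ = _ := by
            rw [ENNReal.tsum_mul_left, ENNReal.tsum_add]
    calc sobW t k * T k ^ (2:ℝ)
        = (sobW (t/2) k * T k) ^ (2:ℝ) := by
          rw [ENNReal.mul_rpow_of_nonneg _ _ (by norm_num), sobW_rpow,
            show t/2*2 = t by ring]
      _ ≤ ((2:ℝ≥0∞)^(t/2) * (S1 k + S2 k)) ^ (2:ℝ) := ENNReal.rpow_le_rpow hU (by norm_num)
      _ = (2:ℝ≥0∞)^t * (S1 k + S2 k)^(2:ℝ) := by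
          rw [ENNReal.mul_rpow_of_nonneg _ _ (by norm_num), ← ENNReal.rpow_mul,
            show t/2*2 = t by ring]
      _ ≤ (2:ℝ≥0∞)^t * (4 * (S1 k ^(2:ℝ) + S2 k ^(2:ℝ))) :=
          mul_le_mul_right (sob_add_sq_le _ _) _
      _ = _ := by ring
  have hsumS1 : ∑' k : ℤ, S1 k ^ (2:ℝ)
      ≤ Z * ((∑' j : ℤ, sobW r j * a j ^ (2:ℝ)) * (∑' j : ℤ, sobW s j * b j ^ (2:ℝ))) := by
    have h := sob_conv_sq (fun j => sobW (t/2) j * a j) b htr hs0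
    have e1 : ∀ j : ℤ, sobW (r - t) j * (sobW (t/2) j * a j) ^ (2:ℝ)
        = sobW r j * a j ^ (2:ℝ) := by
      intro j
      rw [ENNReal.mul_rpow_of_nonneg _ _ (by norm_num), sobW_rpow, ← mul_assoc, sobW_mul,
        show r - t + t/2*2 = r by ring]
    rw [tsum_congr e1, show (-(r - t + s)) = (-(r+s-t)) by ring] at h
    exact h
  have hsumS2 : ∑' k : ℤ, S2 k ^ (2:ℝ)
      ≤ Z * ((∑' j : ℤ, sobW r j * a j ^ (2:ℝ)) * (∑' j : ℤ, sobW s j * b j ^ (2:ℝ))) := by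
    have h := sob_conv_sq a (fun j => sobW (t/2) j * b j) hr0 hst
    have e1 : ∀ j : ℤ, sobW (s - t) j * (sobW (t/2) j * b j) ^ (2:ℝ)
        = sobW s j * b j ^ (2:ℝ) := by
      intro j
      rw [ENNReal.mul_rpow_of_nonneg _ _ (by norm_num), sobW_rpow, ← mul_assoc, sobW_mul,
        show s - t + t/2*2 = s by ring]
    rw [tsum_congr e1, show (-(r + (s - t))) = (-(r+s-t)) by ring] at h
    exact h
  have main : ∑' k : ℤ, ENNReal.ofReal ((1 + (k:ℝ)^2)^t * (∑' j : ℤ, ψ j * φ (k - j))^2)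
      ≤ K * ((∑' j : ℤ, sobW r j * a j ^ (2:ℝ)) * (∑' j : ℤ, sobW s j * b j ^ (2:ℝ))) := by
    calc ∑' k : ℤ, ENNReal.ofReal ((1 + (k:ℝ)^2)^t * (∑' j : ℤ, ψ j * φ (k - j))^2)
        ≤ ∑' k : ℤ, sobW t k * T k ^ (2:ℝ) := ENNReal.tsum_le_tsum stepA
      _ ≤ ∑' k : ℤ, (2:ℝ≥0∞)^t * 4 * (S1 k ^ (2:ℝ) + S2 k ^ (2:ℝ)) :=
          ENNReal.tsum_le_tsum stepB
      _ = (2:ℝ≥0∞)^t * 4 * (∑' k : ℤ, S1 k ^ (2:ℝ) + ∑' k : ℤ, S2 k ^ (2:ℝ)) := by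
          rw [ENNReal.tsum_mul_left, ENNReal.tsum_add]
      _ ≤ (2:ℝ≥0∞)^t * 4 *
          (Z * ((∑' j : ℤ, sobW r j * a j ^ (2:ℝ)) * (∑' j : ℤ, sobW s j * b j ^ (2:ℝ)))
            + Z * ((∑' j : ℤ, sobW r j * a j ^ (2:ℝ)) * (∑' j : ℤ, sobW s j * b j ^ (2:ℝ)))) :=
          mul_le_mul_right (add_le_add hsumS1 hsumS2) _
      _ = K * ((∑' j : ℤ, sobW r j * a j ^ (2:ℝ)) * (∑' j : ℤ, sobW s j * b j ^ (2:ℝ))) := by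
          rw [hKdef]; ring
  rw [hP, hQ] at main
  have hRfin : K * (ENNReal.ofReal (∑' k : ℤ, (1 + (k:ℝ)^2)^r * (ψ k)^2)
      * ENNReal.ofReal (∑' k : ℤ, (1 + (k:ℝ)^2)^s * (φ k)^2)) ≠ ⊤ :=
    ENNReal.mul_ne_top hKtop
      (ENNReal.mul_ne_top ENNReal.ofReal_ne_top ENNReal.ofReal_ne_top)
  have hLr : (∑' k : ℤ, (1 + (k:ℝ)^2)^t * (∑' j : ℤ, ψ j * φ (k - j))^2)
      = (∑' k : ℤ, ENNReal.ofReal ((1 + (k:ℝ)^2)^t * (∑' j : ℤ, ψ j * φ (k - j))^2)).toReal := by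
    rw [ENNReal.tsum_toReal_eq (fun _ => ENNReal.ofReal_ne_top)]
    exact tsum_congr fun k => (ENNReal.toReal_ofReal (by positivity)).symm
  rw [hLr, hC2]
  have hfinal := ENNReal.toReal_mono hRfin main
  rw [ENNReal.toReal_mul, ENNReal.toReal_mul] at hfinal
  have hKTR : ((2:ℝ≥0∞)^t*8).toReal * Z.toReal = K.toReal := by
    simp [hKdef, ENNReal.toReal_mul]
  have hPQ : (ENNReal.ofReal (∑' k : ℤ, (1 + (k:ℝ)^2)^r * (ψ k)^2)
      * ENNReal.ofReal (∑' k : ℤ, (1 + (k:ℝ)^2)^s * (φ k)^2)).toReal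
      = (∑' k : ℤ, (1 + (k:ℝ)^2)^r * (ψ k)^2) * (∑' k : ℤ, (1 + (k:ℝ)^2)^s * (φ k)^2) := by
    rw [ENNReal.toReal_mul,
      ENNReal.toReal_ofReal (tsum_nonneg fun k => by positivity),
      ENNReal.toReal_ofReal (tsum_nonneg fun k => by positivity)]
  calc (∑' k : ℤ, ENNReal.ofReal ((1 + (k:ℝ)^2)^t * (∑' j : ℤ, ψ j * φ (k - j))^2)).toReal
      ≤ ((2:ℝ≥0∞)^t*8).toReal * Z.toReal *
        (ENNReal.ofReal (∑' k : ℤ, (1 + (k:ℝ)^2)^r * (ψ k)^2)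
          * ENNReal.ofReal (∑' k : ℤ, (1 + (k:ℝ)^2)^s * (φ k)^2)).toReal := hfinal
    _ = K.toReal * ((∑' k : ℤ, (1 + (k:ℝ)^2)^r * (ψ k)^2)
          * (∑' k : ℤ, (1 + (k:ℝ)^2)^s * (φ k)^2)) := by rw [hPQ, hKTR]
    _ = _ := by ring
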